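/- Let n ≥ 2, let φ : [0,∞) → [0,∞) be an increasing, convex, non-constant function, and let μ be the probability measure on ℝⁿ with density x ↦ e^{-φ(|x|)}. Let K ⊂ ℝⁿ be a convex symmetric body and let r(K, B₂ⁿ) = max{R > 0 : R·B₂ⁿ ⊆ K}. Then limsup_{t→∞} ln(μ((tK)^c)) / φ(r(K, B₂ⁿ)·t) = -1. -/

import Mathlib

open MeasureTheory Filter Set Pointwise

set_option maxHeartbeats 1000000

section Aux
open Metric

lemma phi_growth (φ : ℝ → ℝ) (hmono : MonotoneOn φ (Set.Ici 0))
    (hconv : ConvexOn ℝ (Set.Ici 0) φ)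
    (hnc : ∃ s t : ℝ, 0 ≤ s ∧ 0 ≤ t ∧ φ s ≠ φ t) :
    ∃ v a : ℝ, 0 ≤ v ∧ 0 < a ∧ ∀ T s, v ≤ T → T ≤ s → a * (s - T) ≤ φ s - φ T := by
  obtain ⟨s₀, t₀, hs₀, ht₀, hne⟩ := hnc
  -- find u₀ < v₀ with φ u₀ < φ v₀
  obtain ⟨u₀, v₀, hu₀, hv₀, huv, hlt⟩ :
      ∃ u v : ℝ, 0 ≤ u ∧ 0 ≤ v ∧ u < v ∧ φ u < φ v := by
    rcases lt_trichotomy s₀ t₀ with h | h | h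
    · exact ⟨s₀, t₀, hs₀, ht₀, h, lt_of_le_of_ne (hmono hs₀ ht₀ h.le) hne⟩
    · exact absurd (congrArg φ h) hne
    · exact ⟨t₀, s₀, ht₀, hs₀, h, lt_of_le_of_ne (hmono ht₀ hs₀ h.le) (Ne.symm hne)⟩
  refine ⟨v₀, (φ v₀ - φ u₀) / (v₀ - u₀), hv₀, div_pos (by linarith) (by linarith), ?_⟩
  intro T s hT hs
  rcases eq_or_lt_of_le hs with rfl | hTs
  · simp
  have hT0 : (0:ℝ) ≤ T := le_trans hv₀ hT
  have hs0 : (0:ℝ) ≤ s := le_trans hT0 hs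
  have key : (φ v₀ - φ u₀) / (v₀ - u₀) ≤ (φ s - φ T) / (s - T) := by
    rcases eq_or_lt_of_le hT with rfl | hvT
    · exact hconv.slope_mono_adjacent hu₀ hs0 huv hTs
    · calc (φ v₀ - φ u₀) / (v₀ - u₀) ≤ (φ T - φ v₀) / (T - v₀) :=
            hconv.slope_mono_adjacent hu₀ hT0 huv hvT
      _ ≤ (φ s - φ T) / (s - T) := hconv.slope_mono_adjacent hv₀ hs0 hvT hTs
  calc (φ v₀ - φ u₀) / (v₀ - u₀) * (s - T) ≤ (φ s - φ T) / (s - T) * (s - T) := by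
        apply mul_le_mul_of_nonneg_right key (by linarith)
  _ = φ s - φ T := by
        rw [div_mul_cancel₀]
        linarith

lemma phi_tendsto (φ : ℝ → ℝ) {v a : ℝ} (hv : 0 ≤ v) (ha : 0 < a)
    (hgrow : ∀ T s, v ≤ T → T ≤ s → a * (s - T) ≤ φ s - φ T) :
    Tendsto φ atTop atTop := by
  have hlin : Tendsto (fun s => φ v + a * (s - v)) atTop atTop := by
    apply tendsto_atTop_add_const_left
    apply Tendsto.const_mul_atTop ha
    exact tendsto_atTop_add_const_right _ _ tendsto_id
  apply tendsto_atTop_mono' atTop _ hlin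
  filter_upwards [eventually_ge_atTop v] with s hs
  have := hgrow v s le_rfl hs
  linarith

lemma phi_freq (φ : ℝ → ℝ) (hmono : MonotoneOn φ (Set.Ici 0))
    (htop : Tendsto φ atTop atTop) {c lam : ℝ} (hc : 0 < c) (hlam : 1 < lam) (S : ℝ) :
    ∃ s, S ≤ s ∧ 0 ≤ s ∧ φ (s + 3 * Real.exp (-(c * φ s))) ≤ lam * φ s := by
  by_contra hcon
  push_neg at hcon
  -- find S' ≥ max S 0 with φ ≥ 1 from S' on
  obtain ⟨S₁, hS₁⟩ := (htop.eventually_ge_atTop 1).exists_forall_of_atTop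
  set S' : ℝ := max (max S 0) S₁ with hS'def
  have hS'S : S ≤ S' := le_trans (le_max_left _ _) (le_max_left _ _)
  have hS'0 : (0:ℝ) ≤ S' := le_trans (le_max_right _ _) (le_max_left _ _)
  have hφ1 : ∀ x, S' ≤ x → 1 ≤ φ x := fun x hx => hS₁ x (le_trans (le_max_right _ _) hx)
  set q : ℝ := Real.exp (-(c * (lam - 1))) with hq
  have hq0 : 0 < q := Real.exp_pos _
  have hq1 : q < 1 := by
    rw [hq, Real.exp_lt_one_iff]
    nlinarith
  set B : ℝ := 3 * Real.exp (-c) / (1 - q) with hB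
  have hB0 : 0 ≤ B := by
    apply div_nonneg (by positivity) (by linarith)
  -- define the sequence
  set g : ℕ → ℝ := fun k => Nat.rec S' (fun _ x => x + 3 * Real.exp (-(c * φ x))) k with hg
  have hgsucc : ∀ k, g (k + 1) = g k + 3 * Real.exp (-(c * φ (g k))) := fun k => rfl
  have hgge : ∀ k, S' ≤ g k := by
    intro k
    induction k with
    | zero => exact le_rfl
    | succ k ih => rw [hgsucc]; have := Real.exp_pos (-(c * φ (g k))); linarith
  have hg0 : ∀ k, (0:ℝ) ≤ g k := fun k => le_trans hS'0 (hgge k)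
  -- φ (g k) ≥ lam ^ k
  have hφg : ∀ k, lam ^ k ≤ φ (g k) := by
    intro k
    induction k with
    | zero => simpa using hφ1 _ (hgge 0)
    | succ k ih =>
      have hck := hcon (g k) (le_trans hS'S (hgge k)) (hg0 k)
      rw [hgsucc] at *
      calc lam ^ (k+1) = lam * lam ^ k := by ring
        _ ≤ lam * φ (g k) := by nlinarith
        _ ≤ φ (g k + 3 * Real.exp (-(c * φ (g k)))) := hck.le
  -- g k ≤ S' + B * (1 - q ^ k)
  have hgle : ∀ k, g k ≤ S' + B * (1 - q ^ k) := by
    intro k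
    induction k with
    | zero =>
      have : g 0 = S' := rfl
      simp [this]
    | succ k ih =>
      have hstep : 3 * Real.exp (-(c * φ (g k))) ≤ 3 * Real.exp (-c) * q ^ k := by
        have h1 : 1 + (k:ℝ) * (lam - 1) ≤ lam ^ k := by
          have := one_add_mul_le_pow (a := lam - 1) (by nlinarith) k
          simpa using this
        have h2 : c * (1 + (k:ℝ) * (lam - 1)) ≤ c * φ (g k) := by
          have := hφg k
          nlinarith
        have h3 : Real.exp (-(c * φ (g k))) ≤ Real.exp (-(c * (1 + (k:ℝ) * (lam - 1)))) :=
          Real.exp_le_exp.mpr (by linarith)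
        have h4 : Real.exp (-(c * (1 + (k:ℝ) * (lam - 1)))) = Real.exp (-c) * q ^ k := by
          rw [hq, ← Real.exp_nat_mul, ← Real.exp_add]
          ring_nf
        rw [h4] at h3
        linarith
      have hq' : B * (1 - q) = 3 * Real.exp (-c) := by
        rw [hB, div_mul_cancel₀ _ (by linarith : (1:ℝ) - q ≠ 0)]
      rw [hgsucc]
      calc g k + 3 * Real.exp (-(c * φ (g k))) ≤ S' + B * (1 - q ^ k) + 3 * Real.exp (-c) * q ^ k := by
            linarith
        _ = S' + B * (1 - q ^ (k+1)) := by
            rw [← hq']; ring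
  -- contradiction
  have hbdd : ∀ k, lam ^ k ≤ φ (S' + B) := by
    intro k
    calc lam ^ k ≤ φ (g k) := hφg k
      _ ≤ φ (S' + B) := by
          apply hmono (hg0 k) (by simp [hS'0, hB0]; linarith)
          calc g k ≤ S' + B * (1 - q ^ k) := hgle k
            _ ≤ S' + B := by nlinarith [pow_nonneg hq0.le k]
  obtain ⟨k, hk⟩ := pow_unbounded_of_one_lt (φ (S' + B)) hlam
  exact absurd (hbdd k) (not_le.mpr hk)

lemma sum_aux (n : ℕ) {x : ℝ} (hx0 : 0 < x) (hx : x < 1) :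
    Summable (fun k : ℕ => ((k : ℝ) + 1) ^ n * x ^ k) := by
  have h1 : Summable (fun m : ℕ => (m : ℝ) ^ n * x ^ m) :=
    summable_pow_mul_geometric_of_norm_lt_one n
      (by rw [Real.norm_eq_abs, abs_of_pos hx0]; exact hx)
  have h2 : Summable (fun k : ℕ => ((k + 1 : ℕ) : ℝ) ^ n * x ^ (k + 1)) :=
    (summable_nat_add_iff (f := fun m : ℕ => (m : ℝ) ^ n * x ^ m) 1).mpr h1
  have h3 := h2.mul_left x⁻¹
  apply h3.congr
  intro k
  push_cast
  field_simp
  ring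

lemma tail_upper (n : ℕ) (hn : 0 < n) (φ : ℝ → ℝ) (hmono : MonotoneOn φ (Set.Ici 0))
    {v a : ℝ} (hv : 0 ≤ v) (ha : 0 < a)
    (hgrow : ∀ T s, v ≤ T → T ≤ s → a * (s - T) ≤ φ s - φ T) :
    ∃ C : ℝ, 0 < C ∧ ∀ T, v ≤ T →
      (volume.withDensity fun x : EuclideanSpace ℝ (Fin n) =>
          ENNReal.ofReal (Real.exp (-φ ‖x‖))) {x | T < ‖x‖}
        ≤ ENNReal.ofReal (Real.exp (-φ T) * (T + 1) ^ n * C) := by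
  haveI : Nonempty (Fin n) := ⟨⟨0, hn⟩⟩
  set Vr := (volume (ball (0 : EuclideanSpace ℝ (Fin n)) 1)).toReal with hVr
  have hVfin : volume (ball (0 : EuclideanSpace ℝ (Fin n)) 1) ≠ ⊤ :=
    measure_ball_lt_top.ne
  have hVeq : volume (ball (0 : EuclideanSpace ℝ (Fin n)) 1) = ENNReal.ofReal Vr :=
    (ENNReal.ofReal_toReal hVfin).symm
  have hVpos : 0 < Vr :=
    ENNReal.toReal_pos (measure_ball_pos volume _ one_pos).ne' hVfin
  -- summability
  have hea : Real.exp (-a) < 1 := by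
    rw [Real.exp_lt_one_iff]; linarith
  have hea0 : 0 < Real.exp (-a) := Real.exp_pos _
  have hsum : Summable (fun k : ℕ => ((k : ℝ) + 1) ^ n * Real.exp (-a) ^ k) :=
    sum_aux n hea0 hea
  set C₀ : ℝ := ∑' k : ℕ, ((k : ℝ) + 1) ^ n * Real.exp (-a) ^ k with hC₀
  have hC₀pos : 0 < C₀ := by
    have h1 := hsum.le_tsum 0 (fun j _ => by positivity)
    norm_num at h1
    rw [hC₀]
    linarith
  refine ⟨Vr * C₀, by positivity, ?_⟩
  intro T hT
  have hT0 : (0 : ℝ) ≤ T := le_trans hv hT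
  -- shells
  set S : ℕ → Set (EuclideanSpace ℝ (Fin n)) :=
    fun k => {x | T + k < ‖x‖ ∧ ‖x‖ ≤ T + k + 1} with hS
  have hSmeas : ∀ k, MeasurableSet (S k) := by
    intro k
    exact (measurableSet_lt measurable_const measurable_norm).inter
      (measurableSet_le measurable_norm measurable_const)
  have hcover : {x : EuclideanSpace ℝ (Fin n) | T < ‖x‖} ⊆ ⋃ k, S k := by
    intro x hx
    simp only [mem_setOf_eq] at hx
    have hd : 0 < ‖x‖ - T := by linarith
    set d := ‖x‖ - T with hdd
    have hceil1 : 1 ≤ ⌈d⌉₊ := Nat.one_le_ceil_iff.mpr hd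
    refine mem_iUnion.mpr ⟨⌈d⌉₊ - 1, ?_, ?_⟩
    · have h1 : ((⌈d⌉₊ - 1 : ℕ) : ℝ) = (⌈d⌉₊ : ℝ) - 1 := by
        push_cast [Nat.cast_sub hceil1]
        ring
      have h2 : (⌈d⌉₊ : ℝ) < d + 1 := Nat.ceil_lt_add_one hd.le
      simp only [mem_setOf_eq, h1]
      linarith
    · have h1 : ((⌈d⌉₊ - 1 : ℕ) : ℝ) = (⌈d⌉₊ : ℝ) - 1 := by
        push_cast [Nat.cast_sub hceil1]
        ring
      have h2 : d ≤ (⌈d⌉₊ : ℝ) := Nat.le_ceil d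
      simp only [mem_setOf_eq, h1]
      linarith
  -- per-shell bound
  set μd := (volume.withDensity fun x : EuclideanSpace ℝ (Fin n) =>
      ENNReal.ofReal (Real.exp (-φ ‖x‖))) with hμd
  have hshell : ∀ k : ℕ, μd (S k) ≤
      ENNReal.ofReal (Real.exp (-φ T) * (T + 1) ^ n * (Vr * (((k : ℝ) + 1) ^ n * Real.exp (-a) ^ k))) := by
    intro k
    have hφk : ∀ x ∈ S k, Real.exp (-φ ‖x‖) ≤ Real.exp (-(φ T + a * k)) := by
      intro x hx
      obtain ⟨hx1, hx2⟩ := hx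
      apply Real.exp_le_exp.mpr
      have hk0 : (0:ℝ) ≤ (k:ℝ) := Nat.cast_nonneg k
      have hm : φ (T + k) ≤ φ ‖x‖ := by
        apply hmono (mem_Ici.mpr (by linarith)) (mem_Ici.mpr (by linarith)) hx1.le
      have hg := hgrow T (T + k) hT (by linarith)
      have : a * k ≤ φ (T + k) - φ T := by
        have := hg
        simpa using this
      linarith
    calc μd (S k) = ∫⁻ x in S k, ENNReal.ofReal (Real.exp (-φ ‖x‖)) := by
          rw [hμd, withDensity_apply _ (hSmeas k)]
      _ ≤ ∫⁻ _ in S k, ENNReal.ofReal (Real.exp (-(φ T + a * k))) := by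
          apply setLIntegral_mono' (hSmeas k)
          intro x hx
          exact ENNReal.ofReal_le_ofReal (hφk x hx)
      _ = ENNReal.ofReal (Real.exp (-(φ T + a * k))) * volume (S k) := setLIntegral_const _ _
      _ ≤ ENNReal.ofReal (Real.exp (-(φ T + a * k))) * volume (closedBall (0 : EuclideanSpace ℝ (Fin n)) (T + k + 1)) := by
          apply mul_le_mul_right
          apply measure_mono
          intro x hx
          exact mem_closedBall_zero_iff.mpr hx.2
      _ = ENNReal.ofReal (Real.exp (-(φ T + a * k))) * (ENNReal.ofReal ((T + k + 1) ^ n) * ENNReal.ofReal Vr) := by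
          rw [Measure.addHaar_closedBall volume _ (by positivity), hVeq, finrank_euclideanSpace_fin]
      _ = ENNReal.ofReal (Real.exp (-(φ T + a * k)) * (T + k + 1) ^ n * Vr) := by
          rw [← ENNReal.ofReal_mul (by positivity), ← ENNReal.ofReal_mul (by positivity), mul_assoc]
      _ ≤ ENNReal.ofReal (Real.exp (-φ T) * (T + 1) ^ n * (Vr * (((k : ℝ) + 1) ^ n * Real.exp (-a) ^ k))) := by
          apply ENNReal.ofReal_le_ofReal
          have hsplit : Real.exp (-(φ T + a * k)) = Real.exp (-φ T) * Real.exp (-a) ^ k := by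
            rw [← Real.exp_nat_mul, ← Real.exp_add]
            ring_nf
          have hpow : (T + k + 1) ^ n ≤ (T + 1) ^ n * ((k : ℝ) + 1) ^ n := by
            rw [← mul_pow]
            apply pow_le_pow_left₀ (by positivity)
            nlinarith [hT0, Nat.cast_nonneg (α := ℝ) k]
          rw [hsplit]
          have h1 : 0 ≤ Real.exp (-φ T) * Real.exp (-a) ^ k := by positivity
          calc Real.exp (-φ T) * Real.exp (-a) ^ k * (T + ↑k + 1) ^ n * Vr
              ≤ Real.exp (-φ T) * Real.exp (-a) ^ k * ((T + 1) ^ n * ((k:ℝ) + 1) ^ n) * Vr :=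
                mul_le_mul_of_nonneg_right (mul_le_mul_of_nonneg_left hpow h1) hVpos.le
            _ = Real.exp (-φ T) * (T + 1) ^ n * (Vr * (((k:ℝ) + 1) ^ n * Real.exp (-a) ^ k)) := by
                ring
    -- final sum
  calc μd {x | T < ‖x‖} ≤ μd (⋃ k, S k) := measure_mono hcover
    _ ≤ ∑' k, μd (S k) := measure_iUnion_le _
    _ ≤ ∑' k : ℕ, ENNReal.ofReal (Real.exp (-φ T) * (T + 1) ^ n * (Vr * (((k : ℝ) + 1) ^ n * Real.exp (-a) ^ k))) :=
        ENNReal.tsum_le_tsum hshell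
    _ = ENNReal.ofReal (∑' k : ℕ, Real.exp (-φ T) * (T + 1) ^ n * (Vr * (((k : ℝ) + 1) ^ n * Real.exp (-a) ^ k))) := by
        rw [ENNReal.ofReal_tsum_of_nonneg (fun k => by positivity)
          (((hsum.mul_left Vr).mul_left (Real.exp (-φ T) * (T + 1) ^ n)).congr (fun k => by ring))]
    _ = ENNReal.ofReal (Real.exp (-φ T) * (T + 1) ^ n * (Vr * C₀)) := by
        congr 1
        rw [hC₀, ← tsum_mul_left (a := Vr), ← tsum_mul_left (a := Real.exp (-φ T) * (T + 1) ^ n)]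

variable {n : ℕ}
lemma ball_lower (hn : 0 < n) (φ : ℝ → ℝ) (hmono : MonotoneOn φ (Set.Ici 0))
    {p : EuclideanSpace ℝ (Fin n)} {ρ s3 : ℝ} (hρ : 0 < ρ)
    (hball : ∀ x ∈ ball p ρ, ‖x‖ ≤ s3) :
    ENNReal.ofReal (Real.exp (-φ s3) * ρ ^ n *
        (volume (ball (0 : EuclideanSpace ℝ (Fin n)) 1)).toReal)
      ≤ (volume.withDensity fun x : EuclideanSpace ℝ (Fin n) =>
          ENNReal.ofReal (Real.exp (-φ ‖x‖))) (ball p ρ) := by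
  haveI : Nonempty (Fin n) := ⟨⟨0, hn⟩⟩
  set Vr := (volume (ball (0 : EuclideanSpace ℝ (Fin n)) 1)).toReal with hVr
  have hVfin : volume (ball (0 : EuclideanSpace ℝ (Fin n)) 1) ≠ ⊤ :=
    measure_ball_lt_top.ne
  have hVeq : volume (ball (0 : EuclideanSpace ℝ (Fin n)) 1) = ENNReal.ofReal Vr :=
    (ENNReal.ofReal_toReal hVfin).symm
  rw [withDensity_apply _ measurableSet_ball]
  have hmeasball : volume (ball p ρ) = ENNReal.ofReal (ρ ^ n) * ENNReal.ofReal Vr := by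
    rw [Measure.addHaar_ball volume p hρ.le, hVeq, finrank_euclideanSpace_fin]
  calc ENNReal.ofReal (Real.exp (-φ s3) * ρ ^ n * Vr)
      = ENNReal.ofReal (Real.exp (-φ s3)) * (ENNReal.ofReal (ρ ^ n) * ENNReal.ofReal Vr) := by
        rw [← ENNReal.ofReal_mul (by positivity), ← ENNReal.ofReal_mul (by positivity), mul_assoc]
    _ = ENNReal.ofReal (Real.exp (-φ s3)) * volume (ball p ρ) := by rw [hmeasball]
    _ = ∫⁻ _ in ball p ρ, ENNReal.ofReal (Real.exp (-φ s3)) := by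
        rw [setLIntegral_const, mul_comm]
    _ ≤ ∫⁻ x in ball p ρ, ENNReal.ofReal (Real.exp (-φ ‖x‖)) := by
        apply setLIntegral_mono' measurableSet_ball
        intro x hx
        apply ENNReal.ofReal_le_ofReal
        apply Real.exp_le_exp.mpr
        have hx3 := hball x hx
        have : φ ‖x‖ ≤ φ s3 := hmono (norm_nonneg x) (le_trans (norm_nonneg x) hx3) hx3
        linarith

lemma contact_dir (n : ℕ)
    (K : Set (EuclideanSpace ℝ (Fin n)))
    (hKconv : Convex ℝ K) (hKclosed : IsClosed K)
    (hKint : (interior K).Nonempty)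
    {r : ℝ}
    (hr : IsGreatest {R : ℝ | 0 < R ∧
        R • Metric.closedBall (0 : EuclideanSpace ℝ (Fin n)) 1 ⊆ K} r) :
    ∃ θ : EuclideanSpace ℝ (Fin n), ‖θ‖ = 1 ∧ ∀ y ∈ K, inner ℝ θ y ≤ r := by
  obtain ⟨⟨hrpos, hrK⟩, hmax⟩ := hr
  have hball : closedBall (0 : EuclideanSpace ℝ (Fin n)) r ⊆ K := by
    have := smul_unitClosedBall (E := EuclideanSpace ℝ (Fin n)) r
    rw [this, Real.norm_of_nonneg hrpos.le] at hrK
    exact hrK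
  -- find contact point
  obtain ⟨x₀, hx₀norm, hx₀⟩ :
      ∃ x₀ : EuclideanSpace ℝ (Fin n), ‖x₀‖ = r ∧ x₀ ∉ interior K := by
    by_contra hcon
    push_neg at hcon
    have hsub : closedBall (0 : EuclideanSpace ℝ (Fin n)) r ⊆ interior K := by
      intro x hx
      rcases lt_or_eq_of_le (mem_closedBall_zero_iff.mp hx) with h | h
      · have : x ∈ ball (0 : EuclideanSpace ℝ (Fin n)) r := mem_ball_zero_iff.mpr h
        rw [← interior_closedBall _ hrpos.ne'] at this
        exact interior_mono hball this
      · exact hcon x h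
    obtain ⟨δ, hδ, hsub2⟩ :=
      (isCompact_closedBall (0 : EuclideanSpace ℝ (Fin n)) r).exists_cthickening_subset_open
        isOpen_interior hsub
    rw [cthickening_closedBall hδ.le hrpos.le] at hsub2
    have hmem : δ + r ∈ {R : ℝ | 0 < R ∧
        R • Metric.closedBall (0 : EuclideanSpace ℝ (Fin n)) 1 ⊆ K} := by
      constructor
      · linarith
      · rw [smul_unitClosedBall, Real.norm_of_nonneg (by linarith)]
        exact hsub2.trans interior_subset
    have := hmax hmem
    linarith
  obtain ⟨f, hf⟩ := geometric_hahn_banach_open_point (hKconv.interior) isOpen_interior hx₀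
  obtain ⟨z, hz⟩ := hKint
  -- f y ≤ f x₀ on K
  have hK : ∀ y ∈ K, f y ≤ f x₀ := by
    intro y hy
    by_contra hgt
    push_neg at hgt
    set d : ℝ := f y - f x₀ with hd
    have hd0 : 0 < d := by rw [hd]; linarith
    set A : ℝ := |f z - f y| with hA
    have hA0 : 0 ≤ A := abs_nonneg _
    set ε : ℝ := min (1/2) (d / (2 * (A + 1))) with hε
    have hε0 : 0 < ε := lt_min (by norm_num) (by positivity)
    have hε1 : ε ≤ 1/2 := min_le_left _ _
    have hεd : ε ≤ d / (2 * (A + 1)) := min_le_right _ _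
    have hmem := hKconv.combo_interior_self_mem_interior hz hy hε0 (by linarith : (0:ℝ) ≤ 1 - ε)
      (by ring)
    have hlt := hf _ hmem
    rw [map_add, _root_.map_smul, _root_.map_smul] at hlt
    have hεA : ε * A ≤ d / 2 := by
      calc ε * A ≤ d / (2 * (A + 1)) * A := mul_le_mul_of_nonneg_right hεd hA0
        _ ≤ d / 2 := by
            rw [div_mul_eq_mul_div, div_le_div_iff₀ (by positivity) (by norm_num)]
            nlinarith
    have habs : f z - f y ≥ -A := neg_abs_le _
    have : ε * (f z - f y) ≥ -(d/2) := by nlinarith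
    have hcomp : ε • f z + (1 - ε) • f y = ε * (f z - f y) + f y := by
      simp [smul_eq_mul]; ring
    rw [hcomp] at hlt
    linarith
  -- Riesz
  set v : EuclideanSpace ℝ (Fin n) := (InnerProductSpace.toDual ℝ _).symm f with hv
  have hfv : ∀ y, f y = inner ℝ v y := by
    intro y
    have := (InnerProductSpace.toDual ℝ (EuclideanSpace ℝ (Fin n))).apply_symm_apply f
    rw [← this, InnerProductSpace.toDual_apply_apply]
  have hvne : v ≠ 0 := by
    intro h0
    have := hf z hz
    rw [hfv z, hfv x₀, h0] at this
    simp at this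
  have hvnorm : 0 < ‖v‖ := norm_pos_iff.mpr hvne
  refine ⟨‖v‖⁻¹ • v, ?_, ?_⟩
  · rw [norm_smul, norm_inv, norm_norm, inv_mul_cancel₀ hvnorm.ne']
  · intro y hy
    have h1 : inner ℝ (‖v‖⁻¹ • v) y = ‖v‖⁻¹ * inner ℝ v y := real_inner_smul_left _ _ _
    have h2 : (inner ℝ v y : ℝ) ≤ inner ℝ v x₀ := by
      rw [← hfv y, ← hfv x₀]; exact hK y hy
    have h3 : ‖v‖⁻¹ * (inner ℝ v y : ℝ) ≤ ‖v‖⁻¹ * inner ℝ v x₀ :=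
      mul_le_mul_of_nonneg_left h2 (by positivity)
    have h4 : (inner ℝ (‖v‖⁻¹ • v) x₀ : ℝ) ≤ ‖(‖v‖⁻¹ • v)‖ * ‖x₀‖ := real_inner_le_norm _ _
    rw [norm_smul, norm_inv, norm_norm, inv_mul_cancel₀ hvnorm.ne', one_mul, hx₀norm] at h4
    rw [h1]
    calc ‖v‖⁻¹ * (inner ℝ v y : ℝ) ≤ ‖v‖⁻¹ * inner ℝ v x₀ := h3
      _ = inner ℝ (‖v‖⁻¹ • v) x₀ := (real_inner_smul_left _ _ _).symm
      _ ≤ r := h4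

end Aux

open Metric in
theorem stmt5 (n : ℕ) (hn : 2 ≤ n)
    (φ : ℝ → ℝ)
    (hmono : MonotoneOn φ (Set.Ici 0))
    (hconv : ConvexOn ℝ (Set.Ici 0) φ)
    (hnonneg : ∀ t ∈ Set.Ici (0 : ℝ), 0 ≤ φ t)
    (hnc : ∃ s t : ℝ, 0 ≤ s ∧ 0 ≤ t ∧ φ s ≠ φ t)
    (μ : Measure (EuclideanSpace ℝ (Fin n)))
    (hμ : μ = volume.withDensity fun x => ENNReal.ofReal (Real.exp (-φ ‖x‖)))
    (hprob : IsProbabilityMeasure μ)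
    (K : Set (EuclideanSpace ℝ (Fin n)))
    (hKcomp : IsCompact K) (hKconv : Convex ℝ K)
    (hKint : (interior K).Nonempty) (hKsymm : K = -K)
    (r : ℝ)
    (hr : IsGreatest {R : ℝ | 0 < R ∧
        R • Metric.closedBall (0 : EuclideanSpace ℝ (Fin n)) 1 ⊆ K} r) :
    Filter.limsup
      (fun t => Real.log (μ (t • K)ᶜ).toReal / φ (r * t))
      Filter.atTop = -1 := by
  obtain ⟨v, a, hv, ha, hgrow⟩ := phi_growth φ hmono hconv hnc
  have htop : Tendsto φ atTop atTop := phi_tendsto φ hv ha hgrow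
  have hn0 : 0 < n := by omega
  obtain ⟨C, hCpos, htail⟩ := tail_upper n hn0 φ hmono hv ha hgrow
  obtain ⟨θ, hθ, hθK⟩ := contact_dir n K hKconv hKcomp.isClosed hKint hr
  have hrpos : 0 < r := hr.1.1
  set Vr := (volume (Metric.ball (0 : EuclideanSpace ℝ (Fin n)) 1)).toReal with hVr
  have hVpos : 0 < Vr :=
    ENNReal.toReal_pos (measure_ball_pos volume _ one_pos).ne' measure_ball_lt_top.ne
  have hball : Metric.closedBall (0 : EuclideanSpace ℝ (Fin n)) r ⊆ K := by
    have h2 := hr.1.2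
    rwa [smul_unitClosedBall, Real.norm_of_nonneg hrpos.le] at h2
  -- upper inclusion
  have hincl : ∀ t : ℝ, 0 < t → (t • K)ᶜ ⊆ {x : EuclideanSpace ℝ (Fin n) | r * t < ‖x‖} := by
    intro t ht x hx
    simp only [Set.mem_compl_iff] at hx
    by_contra hle
    simp only [Set.mem_setOf_eq, not_lt] at hle
    apply hx
    have h1 : t⁻¹ • x ∈ Metric.closedBall (0 : EuclideanSpace ℝ (Fin n)) r := by
      rw [mem_closedBall_zero_iff, norm_smul, norm_inv, Real.norm_of_nonneg ht.le]
      rw [inv_mul_le_iff₀ ht, mul_comm]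
      simpa using hle
    have h2 : x = t • (t⁻¹ • x) := by
      rw [smul_smul, mul_inv_cancel₀ ht.ne', one_smul]
    rw [h2]
    exact smul_mem_smul_set (hball h1)
  -- lower bound via ball in halfspace
  have hlow : ∀ t ρ : ℝ, 0 < t → 0 < ρ →
      ENNReal.ofReal (Real.exp (-φ (r * t + 3 * ρ)) * ρ ^ n * Vr) ≤ μ ((t • K)ᶜ) := by
    intro t ρ ht hρ
    set p : EuclideanSpace ℝ (Fin n) := (r * t + 2 * ρ) • θ with hp
    have hrt : 0 < r * t := by positivity
    have hpnorm : ‖p‖ = r * t + 2 * ρ := by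
      rw [hp, norm_smul, hθ, mul_one, Real.norm_of_nonneg (by linarith)]
    have hsub : Metric.ball p ρ ⊆ (t • K)ᶜ := by
      intro x hx
      have hxp : ‖x - p‖ < ρ := by rwa [Metric.mem_ball, dist_eq_norm] at hx
      have hip : (inner ℝ θ p : ℝ) = r * t + 2 * ρ := by
        rw [hp, real_inner_smul_right, real_inner_self_eq_norm_mul_norm, hθ]
        ring
      have hix : r * t + ρ < inner ℝ θ x := by
        have h3 : (inner ℝ θ (p - x) : ℝ) ≤ ‖θ‖ * ‖p - x‖ := real_inner_le_norm _ _
        rw [hθ, one_mul, norm_sub_rev] at h3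
        have h4 : (inner ℝ θ (p - x) : ℝ) = inner ℝ θ p - inner ℝ θ x := inner_sub_right _ _ _
        rw [h4, hip] at h3
        linarith
      intro hxK
      obtain ⟨y, hyK, hyx⟩ := hxK
      have : (inner ℝ θ x : ℝ) = t * inner ℝ θ y := by
        rw [← hyx, real_inner_smul_right]
      have h5 : (inner ℝ θ y : ℝ) ≤ r := hθK y hyK
      nlinarith
    have hxnorm : ∀ x ∈ Metric.ball p ρ, ‖x‖ ≤ r * t + 3 * ρ := by
      intro x hx
      have hxp : ‖x - p‖ < ρ := by rwa [Metric.mem_ball, dist_eq_norm] at hx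
      have hxd : p + (x - p) = x := by abel
      calc ‖x‖ = ‖p + (x - p)‖ := by rw [hxd]
        _ ≤ ‖p‖ + ‖x - p‖ := norm_add_le _ _
        _ ≤ r * t + 3 * ρ := by rw [hpnorm]; linarith
    calc ENNReal.ofReal (Real.exp (-φ (r * t + 3 * ρ)) * ρ ^ n * Vr)
        ≤ (volume.withDensity fun x : EuclideanSpace ℝ (Fin n) =>
            ENNReal.ofReal (Real.exp (-φ ‖x‖))) (Metric.ball p ρ) :=
          ball_lower hn0 φ hmono hρ hxnorm
      _ = μ (Metric.ball p ρ) := by rw [hμ]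
      _ ≤ μ ((t • K)ᶜ) := measure_mono hsub
  have hμfin : ∀ s : Set (EuclideanSpace ℝ (Fin n)), μ s ≠ ⊤ := fun s => measure_ne_top μ s
  have hLpos : ∀ t : ℝ, 0 < t → 0 < (μ ((t • K)ᶜ)).toReal := by
    intro t ht
    have h1 := hlow t 1 ht one_pos
    have h2 : (0:ℝ) < Real.exp (-φ (r * t + 3 * 1)) * 1 ^ n * Vr := by positivity
    have h3 : (0:ENNReal) < μ ((t • K)ᶜ) :=
      lt_of_lt_of_le (by simpa using ENNReal.ofReal_pos.mpr h2) h1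
    exact ENNReal.toReal_pos h3.ne' (hμfin _)
  -- eventual upper bound
  have hevent : ∀ ε : ℝ, 0 < ε → ∀ᶠ t in atTop,
      Real.log (μ ((t • K)ᶜ)).toReal / φ (r * t) ≤ -1 + ε := by
    intro ε hε
    have hrtend : Tendsto (fun t : ℝ => r * t) atTop atTop :=
      Tendsto.const_mul_atTop hrpos tendsto_id
    set c : ℝ := ε * a / (2 * (n + 1)) with hc
    have hc0 : 0 < c := by positivity
    have hlog : ∀ᶠ x : ℝ in atTop, ‖Real.log x‖ ≤ c * ‖x‖ :=
      Real.isLittleO_log_id_atTop.def hc0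
    have hlog' : ∀ᶠ T : ℝ in atTop, ‖Real.log (T + 1)‖ ≤ c * ‖T + 1‖ :=
      (tendsto_atTop_add_const_right atTop 1 tendsto_id).eventually hlog
    have hTev : ∀ᶠ T : ℝ in atTop,
        (n : ℝ) * Real.log (T + 1) + Real.log C ≤ ε * φ T ∧ v ≤ T ∧ 1 ≤ φ T := by
      filter_upwards [hlog', htop.eventually_ge_atTop 1, eventually_ge_atTop v,
        eventually_ge_atTop (0:ℝ),
        eventually_ge_atTop ((Real.log C + ε * a / 2 + ε * a * v + ε * |φ v|) * (2 / (ε * a)))]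
        with T h1 h2 h3 h4 h5
      refine ⟨?_, h3, h2⟩
      have hφT : φ v + a * (T - v) ≤ φ T := by
        have := hgrow v T le_rfl h3
        linarith
      have habs : Real.log (T + 1) ≤ c * (T + 1) := by
        have := le_abs_self (Real.log (T + 1))
        have h6 : ‖(T:ℝ) + 1‖ = T + 1 := Real.norm_of_nonneg (by linarith)
        rw [h6] at h1
        calc Real.log (T + 1) ≤ ‖Real.log (T + 1)‖ := le_abs_self _
          _ ≤ c * (T + 1) := h1
      have hnc' : (n : ℝ) * c ≤ ε * a / 2 := by
        rw [hc, ← mul_div_assoc]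
        have h0 : (0:ℝ) < 2 * ((n:ℝ) + 1) := by positivity
        rw [div_le_div_iff₀ h0 two_pos]
        nlinarith [mul_pos hε ha, Nat.cast_nonneg (α := ℝ) n]
      have h7 : 0 < ε * a / 2 := by positivity
      have hεa : ε * a ≠ 0 := by positivity
      have hT5 : Real.log C + ε * a / 2 + ε * a * v + ε * |φ v| ≤ ε * a / 2 * T := by
        set M := Real.log C + ε * a / 2 + ε * a * v + ε * |φ v| with hM
        have h9 : M = M * (2 / (ε * a)) * (ε * a / 2) := by
          field_simp
        calc M = M * (2 / (ε * a)) * (ε * a / 2) := h9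
          _ ≤ T * (ε * a / 2) := mul_le_mul_of_nonneg_right h5 h7.le
          _ = ε * a / 2 * T := by ring
      have hφv : -|φ v| ≤ φ v := neg_abs_le _
      have hcn : (n:ℝ) * Real.log (T + 1) ≤ (n:ℝ) * (c * (T + 1)) := by
        apply mul_le_mul_of_nonneg_left habs (Nat.cast_nonneg n)
      have h8 : (n:ℝ) * (c * (T + 1)) ≤ ε * a / 2 * (T + 1) := by
        rw [← mul_assoc]
        exact mul_le_mul_of_nonneg_right hnc' (by linarith)
      nlinarith [hε]
    filter_upwards [hrtend.eventually hTev, eventually_gt_atTop (0:ℝ)] with t hT ht0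
    obtain ⟨hT1, hT2, hT3⟩ := hT
    have hφpos : 0 < φ (r * t) := by linarith
    -- measure bound
    have hμle : μ ((t • K)ᶜ) ≤ ENNReal.ofReal (Real.exp (-φ (r * t)) * (r * t + 1) ^ n * C) := by
      calc μ ((t • K)ᶜ) ≤ μ {x : EuclideanSpace ℝ (Fin n) | r * t < ‖x‖} :=
            measure_mono (hincl t ht0)
        _ ≤ ENNReal.ofReal (Real.exp (-φ (r * t)) * (r * t + 1) ^ n * C) := by
            rw [hμ]; exact htail (r * t) hT2
    have hrt0 : 0 < r * t := by positivity
    have htr : (μ ((t • K)ᶜ)).toReal ≤ Real.exp (-φ (r * t)) * (r * t + 1) ^ n * C :=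
      ENNReal.toReal_le_of_le_ofReal (by positivity) hμle
    have hlogle : Real.log (μ ((t • K)ᶜ)).toReal ≤
        -φ (r * t) + ((n:ℝ) * Real.log (r * t + 1) + Real.log C) := by
      calc Real.log (μ ((t • K)ᶜ)).toReal
          ≤ Real.log (Real.exp (-φ (r * t)) * (r * t + 1) ^ n * C) :=
            Real.log_le_log (hLpos t ht0) htr
        _ = -φ (r * t) + ((n:ℝ) * Real.log (r * t + 1) + Real.log C) := by
            rw [Real.log_mul (by positivity) hCpos.ne', Real.log_mul (by positivity) (by positivity),
              Real.log_exp, Real.log_pow]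
            ring
    rw [div_le_iff₀ hφpos]
    nlinarith [hT1]
  -- frequent lower bound
  have hfreq : ∀ ε : ℝ, 0 < ε → ∃ᶠ t in atTop,
      -(1 + ε) ≤ Real.log (μ ((t • K)ᶜ)).toReal / φ (r * t) := by
    intro ε hε
    rw [frequently_atTop]
    intro t₀
    set c : ℝ := ε / (4 * n) with hc
    have hc0 : 0 < c := by positivity
    obtain ⟨S₀, hS₀⟩ := (htop.eventually_ge_atTop (max 1 ((4 / ε) * |Real.log Vr|))).exists_forall_of_atTop
    obtain ⟨s, hsS, hs0, hsφ⟩ := phi_freq φ hmono htop hc0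
      (by linarith : (1:ℝ) < 1 + ε / 4) (max (max S₀ (r * t₀)) 1)
    have hsS₀ : S₀ ≤ s := le_trans (le_trans (le_max_left _ _) (le_max_left _ _)) hsS
    have hsrt : r * t₀ ≤ s := le_trans (le_trans (le_max_right _ _) (le_max_left _ _)) hsS
    have hs1 : (1:ℝ) ≤ s := le_trans (le_max_right _ _) hsS
    have hφs1 : 1 ≤ φ s := le_trans (le_max_left _ _) (hS₀ s hsS₀)
    have hφsV : (4 / ε) * |Real.log Vr| ≤ φ s := le_trans (le_max_right _ _) (hS₀ s hsS₀)
    set ρ : ℝ := Real.exp (-(c * φ s)) with hρ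
    have hρ0 : 0 < ρ := Real.exp_pos _
    set t : ℝ := s / r with htdef
    have hts : r * t = s := by
      rw [htdef]; field_simp
    have ht0 : 0 < t := by
      rw [htdef]
      apply div_pos (by linarith) hrpos
    have htt₀ : t₀ ≤ t := by
      rw [htdef, le_div_iff₀ hrpos]
      calc t₀ * r = r * t₀ := by ring
        _ ≤ s := hsrt
    refine ⟨t, htt₀, ?_⟩
    have h1 := hlow t ρ ht0 hρ0
    rw [hts] at h1
    set m : ℝ := Real.exp (-φ (s + 3 * ρ)) * ρ ^ n * Vr with hm
    have hm0 : 0 < m := by positivity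
    have h2 : m ≤ (μ ((t • K)ᶜ)).toReal :=
      (ENNReal.ofReal_le_iff_le_toReal (hμfin _)).mp h1
    have h3 : Real.log m ≤ Real.log (μ ((t • K)ᶜ)).toReal := Real.log_le_log hm0 h2
    have hlogm : Real.log m = -φ (s + 3 * ρ) + (n:ℝ) * (-(c * φ s)) + Real.log Vr := by
      rw [hm, Real.log_mul (by positivity) hVpos.ne', Real.log_mul (by positivity) (by positivity),
        Real.log_exp, hρ, Real.log_pow, Real.log_exp]
    have hnc2 : (n:ℝ) * c = ε / 4 := by
      rw [hc]
      field_simp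
    have hVb : -(ε / 4) * φ s ≤ Real.log Vr := by
      have h4 : |Real.log Vr| ≤ (ε / 4) * φ s := by
        rw [div_mul_eq_mul_div, div_le_iff₀ hε] at hφsV
        linarith
      have := neg_abs_le (Real.log Vr)
      nlinarith
    have hfinal : -(1 + ε) * φ s ≤ Real.log (μ ((t • K)ᶜ)).toReal := by
      have h5 : φ (s + 3 * ρ) ≤ (1 + ε / 4) * φ s := hsφ
      have h6 : (n:ℝ) * (-(c * φ s)) = -(ε / 4) * φ s := by
        rw [← hnc2]; ring
      rw [hlogm, h6] at h3
      nlinarith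
    rw [hts, le_div_iff₀ (by linarith : (0:ℝ) < φ s)]
    linarith [hfinal]
  -- combine
  have hco : IsCoboundedUnder (· ≤ ·) atTop
      (fun t => Real.log (μ ((t • K)ᶜ)).toReal / φ (r * t)) :=
    Filter.IsCoboundedUnder.of_frequently_ge (hfreq 1 one_pos)
  have hbd : IsBoundedUnder (· ≤ ·) atTop
      (fun t => Real.log (μ ((t • K)ᶜ)).toReal / φ (r * t)) :=
    isBoundedUnder_of_eventually_le ((hevent 1 one_pos).mono fun t ht => by linarith)
  apply le_antisymm
  · apply le_of_forall_pos_le_add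
    intro ε hε
    exact Filter.limsup_le_of_le hco ((hevent ε hε).mono fun t ht => by linarith)
  · by_contra hlt
    push_neg at hlt
    set L := Filter.limsup (fun t => Real.log (μ ((t • K)ᶜ)).toReal / φ (r * t)) atTop with hL
    have hε2 : 0 < (-1 - L) / 2 := by linarith
    have h2 : -(1 + (-1 - L)/2) ≤ L :=
      Filter.le_limsup_of_frequently_le (hfreq _ hε2) hbd
    linarith
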